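/- Let β : ℝ_{≥0} → ℝ_{>0} be strictly decreasing with β(0) ≥ 1 and lim_{s→∞} β(s) = 0, and let κ > 1, d ∈ (0,1), τ* := β⁻¹(d/κ). Then β(τ*) = d/κ < 1/κ, and for any sequence defined by x_{k} ≤ β(0)β(τ*)^{k}·x₀ + P_k where P_k := c·h₀·β(0)·Σ_{j=0}^{k-1} β(τ*)^j σ_{k-j-1} + c·h₀·σ_k + Δ·β(0)·Σ_{j=0}^{k-1} β(τ*)^j + Δ with σ_i = κ^{−i}, one has the estimate σ_k^{−1}(x_k − ε + M h₀ σ_k) ≤ β(0)‖x₀‖ + h₀(c(1 + β(0)κ/(1−d)) + M) + κ^{k}(Δ(β(0)/(1 − d/κ) + 1) − ε), for all k ≥ 0, c, h₀, Δ, M, ε ≥ 0. -/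

import Mathlib

open Finset in
lemma geom_aux {r : ℝ} (h0 : 0 ≤ r) (h1 : r < 1) (n : ℕ) :
    ∑ i ∈ range n, r ^ i ≤ (1 - r)⁻¹ := by
  have h2 : 0 < 1 - r := by linarith
  rw [geom_sum_eq h1.ne, div_le_iff_of_neg (by linarith : r - 1 < 0)]
  have h3 : (1 - r)⁻¹ * (1 - r) = 1 := inv_mul_cancel₀ h2.ne'
  nlinarith [pow_nonneg h0 n]

open Finset in
theorem recursive_estimate (β : ℝ → ℝ) (κ d τstar c h₀ Δ M ε : ℝ) (x : ℕ → ℝ)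
    (hβpos : ∀ s, 0 ≤ s → 0 < β s)
    (hβanti : StrictAntiOn β (Set.Ici 0))
    (hβ0 : 1 ≤ β 0)
    (hβlim : Filter.Tendsto β Filter.atTop (nhds 0))
    (hκ : 1 < κ) (hd : d ∈ Set.Ioo (0 : ℝ) 1)
    (hτ : 0 ≤ τstar) (hβτ : β τstar = d / κ)
    (hc : 0 ≤ c) (hh₀ : 0 ≤ h₀) (hΔ : 0 ≤ Δ) (hM : 0 ≤ M) (hε : 0 ≤ ε)
    (hx : ∀ k, 0 ≤ x k)
    (hrec : ∀ k, x k ≤ β 0 * (β τstar) ^ k * x 0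
      + (c * h₀ * β 0 * ∑ j ∈ range k, (β τstar) ^ j * (κ⁻¹) ^ (k - j - 1)
         + c * h₀ * (κ⁻¹) ^ k
         + Δ * β 0 * ∑ j ∈ range k, (β τstar) ^ j + Δ)) :
    β τstar = d / κ ∧ β τstar < 1 / κ ∧
    ∀ k : ℕ, ((κ⁻¹ : ℝ) ^ k)⁻¹ * (x k - ε + M * h₀ * (κ⁻¹) ^ k)
      ≤ β 0 * x 0 + h₀ * (c * (1 + β 0 * κ / (1 - d)) + M)
        + κ ^ k * (Δ * (β 0 / (1 - d / κ) + 1) - ε) := by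
  have hκ0 : (0:ℝ) < κ := lt_trans one_pos hκ
  obtain ⟨hd0, hd1⟩ := hd
  have hbpos : 0 < d / κ := div_pos hd0 hκ0
  have hb1 : d / κ < 1 := (div_lt_one hκ0).mpr (hd1.trans hκ)
  refine ⟨hβτ, by rw [hβτ]; exact (div_lt_div_iff_of_pos_right hκ0).mpr hd1, ?_⟩
  intro k
  simp only [hβτ] at hrec
  have hK : (0:ℝ) < κ ^ k := pow_pos hκ0 k
  have hKne : (κ:ℝ) ^ k ≠ 0 := hK.ne'
  -- rewrite the LHS power
  have hpow : ((κ⁻¹ : ℝ) ^ k)⁻¹ = κ ^ k := by rw [inv_pow, inv_inv]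
  rw [hpow]
  have hcancel : (κ:ℝ) ^ k * (κ⁻¹) ^ k = 1 := by
    rw [inv_pow, mul_inv_cancel₀ hKne]
  -- geometric sums
  set G : ℝ := ∑ j ∈ range k, d ^ j with hGdef
  set Gb : ℝ := ∑ j ∈ range k, (d / κ) ^ j with hGbdef
  have hGnn : 0 ≤ G := Finset.sum_nonneg fun j _ => pow_nonneg hd0.le j
  have hGbnn : 0 ≤ Gb := Finset.sum_nonneg fun j _ => pow_nonneg hbpos.le j
  have hGle : G ≤ (1 - d)⁻¹ := geom_aux hd0.le hd1 k
  have hGble : Gb ≤ (1 - d / κ)⁻¹ := geom_aux hbpos.le hb1 k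
  -- rewrite the mixed sum
  have hsum : ∑ j ∈ range k, (d / κ) ^ j * (κ⁻¹) ^ (k - j - 1)
      = (κ⁻¹) ^ (k - 1) * G := by
    rw [hGdef, Finset.mul_sum]
    refine Finset.sum_congr rfl fun j hj => ?_
    have hjk : j < k := Finset.mem_range.mp hj
    have : k - 1 = j + (k - j - 1) := by omega
    rw [this, pow_add, div_pow, div_eq_mul_inv, inv_pow]
    ring
  have hrk := hrec k
  rw [hsum] at hrk
  -- multiply the recursion bound by κ^k
  have hmul : κ ^ k * x k ≤ κ ^ k * (β 0 * (d / κ) ^ k * x 0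
      + (c * h₀ * β 0 * ((κ⁻¹) ^ (k - 1) * G) + c * h₀ * (κ⁻¹) ^ k
         + Δ * β 0 * Gb + Δ)) := by
    exact mul_le_mul_of_nonneg_left hrk hK.le
  -- simplify the products of powers
  have hdk : κ ^ k * (d / κ) ^ k = d ^ k := by
    rw [div_pow]
    field_simp
  have hkk1 : κ ^ k * ((κ⁻¹) ^ (k - 1) * G) ≤ κ * G := by
    rcases Nat.eq_zero_or_pos k with hk0 | hk0
    · subst hk0
      simp [hGdef]
    · have hk : κ ^ k = κ ^ (k - 1) * κ := by
        rw [← pow_succ]; congr 1; omega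
      have hne : (κ:ℝ) ^ (k - 1) ≠ 0 := (pow_pos hκ0 _).ne'
      apply le_of_eq
      rw [hk, inv_pow]
      field_simp
  have hβ0pos : 0 < β 0 := hβpos 0 le_rfl
  have h1d : 0 < 1 - d := by linarith
  have h1b : 0 < 1 - d / κ := by linarith
  -- bounds on individual terms
  have t1 : κ ^ k * (β 0 * (d / κ) ^ k * x 0) ≤ β 0 * x 0 := by
    have : κ ^ k * (β 0 * (d / κ) ^ k * x 0) = (κ ^ k * (d / κ) ^ k) * (β 0 * x 0) := by
      ring
    rw [this, hdk]
    have hdk1 : d ^ k ≤ 1 := pow_le_one₀ hd0.le hd1.le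
    nlinarith [mul_nonneg hβ0pos.le (hx 0)]
  have t2 : κ ^ k * (c * h₀ * β 0 * ((κ⁻¹) ^ (k - 1) * G))
      ≤ c * h₀ * β 0 * (κ * (1 - d)⁻¹) := by
    have h1 : κ ^ k * (c * h₀ * β 0 * ((κ⁻¹) ^ (k - 1) * G))
        = (c * h₀ * β 0) * (κ ^ k * ((κ⁻¹) ^ (k - 1) * G)) := by ring
    rw [h1]
    have h2 : κ ^ k * ((κ⁻¹) ^ (k - 1) * G) ≤ κ * (1 - d)⁻¹ := by
      refine hkk1.trans ?_
      exact mul_le_mul_of_nonneg_left hGle hκ0.le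
    exact mul_le_mul_of_nonneg_left h2 (by positivity)
  have t3 : κ ^ k * (c * h₀ * (κ⁻¹) ^ k) = c * h₀ := by
    rw [inv_pow]
    field_simp
  have t4 : κ ^ k * (Δ * β 0 * Gb) ≤ κ ^ k * (Δ * β 0 * (1 - d / κ)⁻¹) := by
    apply mul_le_mul_of_nonneg_left _ hK.le
    exact mul_le_mul_of_nonneg_left hGble (by positivity)
  -- assemble
  have key : κ ^ k * x k ≤ β 0 * x 0 + c * h₀ * β 0 * (κ * (1 - d)⁻¹) + c * h₀
      + κ ^ k * (Δ * β 0 * (1 - d / κ)⁻¹) + κ ^ k * Δ := by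
    have expand : κ ^ k * (β 0 * (d / κ) ^ k * x 0
        + (c * h₀ * β 0 * ((κ⁻¹) ^ (k - 1) * G) + c * h₀ * (κ⁻¹) ^ k
           + Δ * β 0 * Gb + Δ))
        = κ ^ k * (β 0 * (d / κ) ^ k * x 0)
          + κ ^ k * (c * h₀ * β 0 * ((κ⁻¹) ^ (k - 1) * G))
          + κ ^ k * (c * h₀ * (κ⁻¹) ^ k)
          + κ ^ k * (Δ * β 0 * Gb) + κ ^ k * Δ := by ring
    rw [expand] at hmul
    linarith [t1, t2, t4, hmul, t3.le, t3.ge]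
  -- final arithmetic
  have lhs_eq : κ ^ k * (x k - ε + M * h₀ * (κ⁻¹) ^ k)
      = κ ^ k * x k - κ ^ k * ε + M * h₀ := by
    linear_combination M * h₀ * hcancel
  rw [lhs_eq]
  have e1 : h₀ * (c * (1 + β 0 * κ / (1 - d)) + M)
      = c * h₀ + c * h₀ * β 0 * (κ * (1 - d)⁻¹) + h₀ * M := by
    rw [div_eq_mul_inv]; ring
  have e2 : κ ^ k * (Δ * (β 0 / (1 - d / κ) + 1) - ε)
      = κ ^ k * (Δ * β 0 * (1 - d / κ)⁻¹) + κ ^ k * Δ - κ ^ k * ε := by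
    rw [div_eq_mul_inv]; ring
  have hMh : 0 ≤ h₀ * M := mul_nonneg hh₀ hM
  linarith [key, mul_nonneg hM hh₀]
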